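/- Table compatibility is upward closed under table subtyping in each argument: for all schemas σ₁, σ₂, σ₁', σ₂', if Table(σ₁') <: Table(σ₁), Table(σ₂') <: Table(σ₂), and Table(σ₁') ~ Table(σ₂'), then Table(σ₁) ~ Table(σ₂). Consequently, if a goal table type is incompatible with a type τ, it is also incompatible with every subtype of τ. -/

import Mathlib

/-- Column types in the refinement type system. -/
inductive ColTy where
  | top | quantitative | qualitative | discrete | continuous
  | nominal | ordinal | temporal
deriving DecidableEq

/-- The subtyping axioms on column types. -/
inductive ColSubAx : ColTy → ColTy → Prop where
  | quant_top : ColSubAx .quantitative .top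
  | qual_top  : ColSubAx .qualitative .top
  | disc_quant : ColSubAx .discrete .quantitative
  | cont_quant : ColSubAx .continuous .quantitative
  | nom_qual  : ColSubAx .nominal .qualitative
  | ord_qual  : ColSubAx .ordinal .qualitative
  | temp_qual : ColSubAx .temporal .qualitative

/-- Column subtyping: the reflexive-transitive closure of the axioms. -/
def ColSub : ColTy → ColTy → Prop := Relation.ReflTransGen ColSubAx

/-- Two column types are compatible iff one is a subtype of the other. -/
def ColCompat (β₁ β₂ : ColTy) : Prop := ColSub β₁ β₂ ∨ ColSub β₂ β₁

/-- A schema is a finite partial map from column names to column types. -/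
abbrev Schema := Finmap (fun _ : String => ColTy)

/-- Table subtyping (a table type `Table σ` is determined by its schema `σ`;
    since `Finmap` is quotiented by permutation, the permutation rule is implicit). -/
inductive TableSub : Schema → Schema → Prop where
  | width (σ₁ σ₂ : Schema) :
      (∀ c τ, σ₂.lookup c = some τ → σ₁.lookup c = some τ) → TableSub σ₁ σ₂
  | depth (σ₁ σ₂ : Schema) :
      σ₁.keys = σ₂.keys →
      (∀ c τ₁ τ₂, σ₁.lookup c = some τ₁ → σ₂.lookup c = some τ₂ → ColSub τ₁ τ₂) →
      TableSub σ₁ σ₂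
  | trans {σ₁ σ₂ σ₃ : Schema} : TableSub σ₁ σ₂ → TableSub σ₂ σ₃ → TableSub σ₁ σ₃

/-- Table compatibility: every shared column's types are compatible. -/
def TableCompat (σ₁ σ₂ : Schema) : Prop :=
  ∀ c τ₁ τ₂, σ₁.lookup c = some τ₁ → σ₂.lookup c = some τ₂ → ColCompat τ₁ τ₂


instance : Fintype ColTy where
  elems := ⟨↑[ColTy.top, .quantitative, .qualitative, .discrete, .continuous,
    .nominal, .ordinal, .temporal], Multiset.coe_nodup.2 (by decide)⟩
  complete := fun x => by cases x <;> decide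

/-- Decidable version of column subtyping. -/
def colLE : ColTy → ColTy → Bool
  | a, b =>
    a = b ||
    (b = .top && a ≠ .top) ||
    (b = .quantitative && (a = .discrete || a = .continuous)) ||
    (b = .qualitative && (a = .nominal || a = .ordinal || a = .temporal))

lemma colLE_of_ax : ∀ {a b : ColTy}, ColSubAx a b → colLE a b = true := by
  intro a b h; cases h <;> decide

lemma colLE_trans_ax : ∀ a b c : ColTy, colLE a b = true → ColSubAx b c → colLE a c = true := by
  intro a b c h hbc
  cases hbc <;> revert h <;> revert a <;> decide

lemma colSub_iff : ∀ a b : ColTy, ColSub a b ↔ colLE a b = true := by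
  have s : ∀ {x y : ColTy}, ColSubAx x y → ColSub x y := fun h => Relation.ReflTransGen.single h
  intro a b
  constructor
  · intro h
    induction h with
    | refl => cases a <;> decide
    | tail hab hbc ih => exact colLE_trans_ax _ _ _ ih hbc
  · intro h
    cases a <;> cases b <;> simp [colLE] at h <;>
      first
        | exact Relation.ReflTransGen.refl
        | exact s .quant_top
        | exact s .qual_top
        | exact s .disc_quant
        | exact s .cont_quant
        | exact s .nom_qual
        | exact s .ord_qual
        | exact s .temp_qual
        | exact (s .disc_quant).trans (s .quant_top)
        | exact (s .cont_quant).trans (s .quant_top)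
        | exact (s .nom_qual).trans (s .qual_top)
        | exact (s .ord_qual).trans (s .qual_top)
        | exact (s .temp_qual).trans (s .qual_top)

lemma colLE_chain : ∀ a b c : ColTy, colLE a b = true → colLE a c = true →
    colLE b c = true ∨ colLE c b = true := by decide

lemma colLE_trans : ∀ a b c : ColTy, colLE a b = true → colLE b c = true →
    colLE a c = true := by decide

lemma colCompat_upward {a a' b b' : ColTy} (ha : ColSub a' a) (hb : ColSub b' b)
    (h : ColCompat a' b') : ColCompat a b := by
  rw [colSub_iff] at ha hb
  rcases h with h | h <;> rw [colSub_iff] at h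
  · rcases colLE_chain a' a b ha (colLE_trans _ _ _ h hb) with h' | h'
    · exact Or.inl ((colSub_iff _ _).2 h')
    · exact Or.inr ((colSub_iff _ _).2 h')
  · rcases colLE_chain b' b a hb (colLE_trans _ _ _ h ha) with h' | h'
    · exact Or.inr ((colSub_iff _ _).2 h')
    · exact Or.inl ((colSub_iff _ _).2 h')

lemma tableSub_lookup {σ' σ : Schema} (h : TableSub σ' σ) :
    ∀ c τ, σ.lookup c = some τ → ∃ τ', σ'.lookup c = some τ' ∧ ColSub τ' τ := by
  induction h with
  | width σ₁ σ₂ hw =>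
      intro c τ hc; exact ⟨τ, hw c τ hc, Relation.ReflTransGen.refl⟩
  | depth σ₁ σ₂ hk hd =>
      intro c τ hc
      have hc2 : c ∈ σ₂ := by
        rw [← Finmap.lookup_isSome, hc]; rfl
      have hc1 : c ∈ σ₁ := by
        rw [← Finmap.mem_keys, hk, Finmap.mem_keys]; exact hc2
      rw [← Finmap.lookup_isSome] at hc1
      obtain ⟨τ', hτ'⟩ := Option.isSome_iff_exists.mp hc1
      exact ⟨τ', hτ', hd c τ' τ hτ' hc⟩
  | trans h1 h2 ih1 ih2 =>
      intro c τ hc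
      obtain ⟨τ₂, hτ₂, hs₂⟩ := ih2 c τ hc
      obtain ⟨τ₁, hτ₁, hs₁⟩ := ih1 c τ₂ hτ₂
      exact ⟨τ₁, hτ₁, hs₁.trans hs₂⟩

/-- Table compatibility is upward closed under table subtyping in each argument;
    consequently incompatibility with a type propagates to all its subtypes. -/
theorem tableCompat_upward_closed :
    (∀ σ₁ σ₂ σ₁' σ₂' : Schema,
      TableSub σ₁' σ₁ → TableSub σ₂' σ₂ → TableCompat σ₁' σ₂' → TableCompat σ₁ σ₂) ∧
    (∀ σg τ τ' : Schema,
      ¬ TableCompat σg τ → TableSub τ' τ → ¬ TableCompat σg τ') := by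
  constructor
  · intro σ₁ σ₂ σ₁' σ₂' h1 h2 hc c τ₁ τ₂ hl₁ hl₂
    obtain ⟨τ₁', hl₁', hs₁⟩ := tableSub_lookup h1 c τ₁ hl₁
    obtain ⟨τ₂', hl₂', hs₂⟩ := tableSub_lookup h2 c τ₂ hl₂
    exact colCompat_upward hs₁ hs₂ (hc c τ₁' τ₂' hl₁' hl₂')
  · intro σg τ τ' hn hsub hc
    exact hn fun c a b ha hb => by
      obtain ⟨b', hb', hs⟩ := tableSub_lookup hsub c b hb
      exact colCompat_upward Relation.ReflTransGen.refl hs (hc c a b' ha hb')
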